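/- arXiv:1602.04951 — 3 statements merged into one kernel-verified Lean document; each statement's English description precedes it below -/
import Mathlib

section
/- For policies π (target) and μ (behavior), λ ∈ [0,1), and any Q-function Q, define the n-step corrected return operator R_n Q = r + ∑_{t=1}^{n} γ^t (P^μ)^{t−1} (P^μ r + P^π Q − P^μ Q) + γ^{n+1} (P^μ)^n P^π Q. Then the λ-average (1−λ) ∑_{n≥0} λ^n R_n Q equals Q + ∑_{t≥0} (λγ)^t (P^μ)^t (T^π Q − Q), where both series converge. -/
open scoped BigOperators

noncomputable section

/-- The operator `P^π` on Q-functions. -/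
def Pop {X A : Type*} [Fintype X] [Fintype A] (P : X → A → X → ℝ) (π : X → A → ℝ)
    (Q : X × A → ℝ) : X × A → ℝ :=
  fun p => ∑ y : X, ∑ b : A, P p.1 p.2 y * π y b * Q (y, b)

/-- The Bellman operator `T^π Q = r + γ P^π Q`. -/
def Tpol {X A : Type*} [Fintype X] [Fintype A] (P : X → A → X → ℝ) (π : X → A → ℝ)
    (γ : ℝ) (r : X × A → ℝ) (Q : X × A → ℝ) : X × A → ℝ :=
  r + γ • Pop P π Q

/-- The n-step off-policy corrected return operator
`R_n Q = r + ∑_{t=1}^{n} γ^t (P^μ)^{t−1} (P^μ r + P^π Q − P^μ Q) + γ^{n+1} (P^μ)^n P^π Q`. -/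
def Rn {X A : Type*} [Fintype X] [Fintype A] (P : X → A → X → ℝ) (π μ : X → A → ℝ)
    (γ : ℝ) (r : X × A → ℝ) (n : ℕ) (Q : X × A → ℝ) : X × A → ℝ :=
  r + ∑ t ∈ Finset.Icc 1 n,
      γ ^ t • (Pop P μ)^[t - 1] (Pop P μ r + Pop P π Q - Pop P μ Q)
    + γ ^ (n + 1) • (Pop P μ)^[n] (Pop P π Q)

section aux
variable {X A : Type*} [Fintype X] [Fintype A]
variable (P : X → A → X → ℝ) (μ : X → A → ℝ)

lemma Pop_add (f g : X × A → ℝ) : Pop P μ (f + g) = Pop P μ f + Pop P μ g := by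
  funext p
  simp [Pop, mul_add, Finset.sum_add_distrib]

lemma Pop_smul (c : ℝ) (f : X × A → ℝ) : Pop P μ (c • f) = c • Pop P μ f := by
  funext p
  simp only [Pop, Pi.smul_apply, smul_eq_mul, Finset.mul_sum]
  congr 1; ext y; congr 1; ext b; ring

lemma Pop_sub (f g : X × A → ℝ) : Pop P μ (f - g) = Pop P μ f - Pop P μ g := by
  funext p
  simp [Pop, mul_sub, Finset.sum_sub_distrib]

lemma iter_add (n : ℕ) (f g : X × A → ℝ) :
    (Pop P μ)^[n] (f + g) = (Pop P μ)^[n] f + (Pop P μ)^[n] g := by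
  induction n with
  | zero => simp
  | succ n ih => simp [Function.iterate_succ_apply', Pop_add, ih]

lemma iter_smul (n : ℕ) (c : ℝ) (f : X × A → ℝ) :
    (Pop P μ)^[n] (c • f) = c • (Pop P μ)^[n] f := by
  induction n with
  | zero => simp
  | succ n ih => simp [Function.iterate_succ_apply', Pop_smul, ih]

lemma iter_sub (n : ℕ) (f g : X × A → ℝ) :
    (Pop P μ)^[n] (f - g) = (Pop P μ)^[n] f - (Pop P μ)^[n] g := by
  induction n with
  | zero => simp
  | succ n ih => simp [Function.iterate_succ_apply', Pop_sub, ih]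

end aux

section aux2
variable {X A : Type*} [Fintype X] [Fintype A]
variable (P : X → A → X → ℝ) (π μ : X → A → ℝ) (γ : ℝ) (r Q : X × A → ℝ)

lemma Rn_eq (n : ℕ) :
    Rn P π μ γ r n Q =
      Q + ∑ t ∈ Finset.range (n + 1), γ ^ t • (Pop P μ)^[t] (Tpol P π γ r Q - Q) := by
  induction n with
  | zero =>
      have h0 : Finset.Icc 1 0 = (∅ : Finset ℕ) := rfl
      simp only [Rn, Tpol, h0, Finset.sum_empty, Finset.range_one, Finset.sum_singleton,
        pow_zero, pow_one, Function.iterate_zero, id_eq, one_smul, add_zero, zero_add]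
      abel
  | succ n ih =>
      rw [Rn, Finset.sum_Icc_succ_top (Nat.le_add_left 1 n)]
      have hrw : r + (∑ t ∈ Finset.Icc 1 n,
          γ ^ t • (Pop P μ)^[t - 1] (Pop P μ r + Pop P π Q - Pop P μ Q)) =
          Rn P π μ γ r n Q - γ ^ (n + 1) • (Pop P μ)^[n] (Pop P π Q) := by
        rw [Rn]; abel
      rw [Finset.sum_range_succ (n := n + 1)]
      have key : γ ^ (n + 1) • (Pop P μ)^[n + 1 - 1] (Pop P μ r + Pop P π Q - Pop P μ Q)
          - γ ^ (n + 1) • (Pop P μ)^[n] (Pop P π Q)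
          + γ ^ (n + 1 + 1) • (Pop P μ)^[n + 1] (Pop P π Q)
          = γ ^ (n + 1) • (Pop P μ)^[n + 1] (Tpol P π γ r Q - Q) := by
        simp only [Nat.add_sub_cancel, Tpol, Function.iterate_succ_apply, Pop_add, Pop_sub,
          Pop_smul, iter_add, iter_sub, iter_smul, pow_succ, mul_smul, smul_add, smul_sub]
        abel
      calc r + (∑ t ∈ Finset.Icc 1 n,
            γ ^ t • (Pop P μ)^[t - 1] (Pop P μ r + Pop P π Q - Pop P μ Q)
            + γ ^ (n + 1) • (Pop P μ)^[n + 1 - 1] (Pop P μ r + Pop P π Q - Pop P μ Q))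
          + γ ^ (n + 1 + 1) • (Pop P μ)^[n + 1] (Pop P π Q)
          = Rn P π μ γ r n Q
            + (γ ^ (n + 1) • (Pop P μ)^[n + 1 - 1] (Pop P μ r + Pop P π Q - Pop P μ Q)
              - γ ^ (n + 1) • (Pop P μ)^[n] (Pop P π Q)
              + γ ^ (n + 1 + 1) • (Pop P μ)^[n + 1] (Pop P π Q)) := by
            rw [← add_assoc, hrw]; abel
        _ = Q + (∑ t ∈ Finset.range (n + 1), γ ^ t • (Pop P μ)^[t] (Tpol P π γ r Q - Q)
              + γ ^ (n + 1) • (Pop P μ)^[n + 1] (Tpol P π γ r Q - Q)) := by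
            rw [ih, key]; abel

end aux2

section norms
variable {X A : Type*} [Fintype X] [Fintype A] [Nonempty X] [Nonempty A]
variable (P : X → A → X → ℝ) (μ : X → A → ℝ)

lemma Pop_norm_le (hP0 : ∀ x a y, 0 ≤ P x a y) (hP1 : ∀ x a, ∑ y : X, P x a y = 1)
    (hμ0 : ∀ x a, 0 ≤ μ x a) (hμ1 : ∀ x, ∑ a : A, μ x a = 1)
    (f : X × A → ℝ) : ‖Pop P μ f‖ ≤ ‖f‖ := by
  rw [pi_norm_le_iff_of_nonneg (norm_nonneg f)]
  intro p
  rw [Pop, Real.norm_eq_abs]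
  calc |∑ y : X, ∑ b : A, P p.1 p.2 y * μ y b * f (y, b)|
      ≤ ∑ y : X, |∑ b : A, P p.1 p.2 y * μ y b * f (y, b)| := Finset.abs_sum_le_sum_abs _ _
    _ ≤ ∑ y : X, ∑ b : A, |P p.1 p.2 y * μ y b * f (y, b)| := by
        exact Finset.sum_le_sum fun y _ => Finset.abs_sum_le_sum_abs _ _
    _ ≤ ∑ y : X, ∑ b : A, P p.1 p.2 y * μ y b * ‖f‖ := by
        refine Finset.sum_le_sum fun y _ => Finset.sum_le_sum fun b _ => ?_
        rw [abs_mul, abs_mul, abs_of_nonneg (hP0 _ _ _), abs_of_nonneg (hμ0 _ _)]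
        have := norm_le_pi_norm f (y, b)
        rw [Real.norm_eq_abs] at this
        exact mul_le_mul_of_nonneg_left this (mul_nonneg (hP0 _ _ _) (hμ0 _ _))
    _ = ‖f‖ := by
        simp only [← Finset.sum_mul, ← Finset.mul_sum]
        have : ∀ y : X, P p.1 p.2 y * ∑ b : A, μ y b = P p.1 p.2 y :=
          fun y => by rw [hμ1, mul_one]
        simp only [this, hP1, one_mul]

lemma iter_norm_le (hP0 : ∀ x a y, 0 ≤ P x a y) (hP1 : ∀ x a, ∑ y : X, P x a y = 1)
    (hμ0 : ∀ x a, 0 ≤ μ x a) (hμ1 : ∀ x, ∑ a : A, μ x a = 1)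
    (n : ℕ) (f : X × A → ℝ) : ‖(Pop P μ)^[n] f‖ ≤ ‖f‖ := by
  induction n with
  | zero => simp
  | succ n ih =>
      rw [Function.iterate_succ_apply']
      exact le_trans (Pop_norm_le P μ hP0 hP1 hμ0 hμ1 _) ih

end norms


set_option maxHeartbeats 1000000 in
/-- `(1−λ) ∑_{n≥0} λ^n R_n Q = Q + ∑_{t≥0} (λγ)^t (P^μ)^t (T^π Q − Q)`,
both series converging. -/
theorem stmt3 {X A : Type*} [Fintype X] [Fintype A] [Nonempty X] [Nonempty A]
    (P : X → A → X → ℝ)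
    (hP0 : ∀ x a y, 0 ≤ P x a y) (hP1 : ∀ x a, ∑ y : X, P x a y = 1)
    (π μ : X → A → ℝ)
    (hπ0 : ∀ x a, 0 ≤ π x a) (hπ1 : ∀ x, ∑ a : A, π x a = 1)
    (hμ0 : ∀ x a, 0 ≤ μ x a) (hμ1 : ∀ x, ∑ a : A, μ x a = 1)
    (γ : ℝ) (hγ0 : 0 ≤ γ) (hγ1 : γ < 1)
    (lam : ℝ) (hl0 : 0 ≤ lam) (hl1 : lam < 1)
    (r : X × A → ℝ) (Q : X × A → ℝ) :
    Summable (fun n : ℕ => ((1 - lam) * lam ^ n) • Rn P π μ γ r n Q) ∧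
    Summable (fun t : ℕ => (lam * γ) ^ t • (Pop P μ)^[t] (Tpol P π γ r Q - Q)) ∧
    ∑' n : ℕ, ((1 - lam) * lam ^ n) • Rn P π μ γ r n Q =
      Q + ∑' t : ℕ, (lam * γ) ^ t • (Pop P μ)^[t] (Tpol P π γ r Q - Q) := by
  set D := Pop P μ with hD
  set Δ : X × A → ℝ := Tpol P π γ r Q - Q with hΔ
  set C : ℝ := ‖Δ‖ with hC
  have hC0 : 0 ≤ C := norm_nonneg _
  have hl1' : 0 < 1 - lam := by linarith
  have hγ1' : 0 < 1 - γ := by linarith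
  have hlg0 : 0 ≤ lam * γ := mul_nonneg hl0 hγ0
  have hlg1 : lam * γ < 1 := by nlinarith
  have hDle : ∀ (n : ℕ) (f : X × A → ℝ), ‖D^[n] f‖ ≤ ‖f‖ :=
    fun n f => iter_norm_le P μ hP0 hP1 hμ0 hμ1 n f
  -- partial sums S n
  set S : ℕ → X × A → ℝ := fun n => ∑ t ∈ Finset.range (n + 1), γ ^ t • D^[t] Δ with hS
  have hRn : ∀ n, Rn P π μ γ r n Q = Q + S n := fun n => Rn_eq P π μ γ r Q n
  have hSbound : ∀ n, ‖S n‖ ≤ C * (1 - γ)⁻¹ := by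
    intro n
    calc ‖S n‖ ≤ ∑ t ∈ Finset.range (n + 1), ‖γ ^ t • D^[t] Δ‖ := norm_sum_le _ _
      _ ≤ ∑ t ∈ Finset.range (n + 1), γ ^ t * C := by
          refine Finset.sum_le_sum fun t _ => ?_
          rw [norm_smul, Real.norm_eq_abs, abs_of_nonneg (pow_nonneg hγ0 t)]
          exact mul_le_mul_of_nonneg_left (hDle t Δ) (pow_nonneg hγ0 t)
      _ = (∑ t ∈ Finset.range (n + 1), γ ^ t) * C := by rw [Finset.sum_mul]
      _ ≤ (1 - γ)⁻¹ * C := by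
          refine mul_le_mul_of_nonneg_right ?_ hC0
          calc ∑ t ∈ Finset.range (n + 1), γ ^ t
              ≤ ∑' t : ℕ, γ ^ t :=
                Summable.sum_le_tsum _ (fun i _ => pow_nonneg hγ0 i)
                  (summable_geometric_of_lt_one hγ0 hγ1)
            _ = (1 - γ)⁻¹ := tsum_geometric_of_lt_one hγ0 hγ1
      _ = C * (1 - γ)⁻¹ := mul_comm _ _
  -- Summability 1
  have hsum1 : Summable (fun n : ℕ => ((1 - lam) * lam ^ n) • Rn P π μ γ r n Q) := by
    refine Summable.of_norm_bounded
      (g := fun n => (1 - lam) * lam ^ n * (‖Q‖ + C * (1 - γ)⁻¹)) ?_ ?_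
    · exact (((summable_geometric_of_lt_one hl0 hl1).mul_left (1 - lam)).mul_right _)
    · intro n
      rw [norm_smul, Real.norm_eq_abs,
        abs_of_nonneg (mul_nonneg hl1'.le (pow_nonneg hl0 n)), hRn n]
      refine mul_le_mul_of_nonneg_left ?_ (mul_nonneg hl1'.le (pow_nonneg hl0 n))
      exact le_trans (norm_add_le _ _) (by linarith [hSbound n])
  -- Summability 2
  have hsum2 : Summable (fun t : ℕ => (lam * γ) ^ t • D^[t] Δ) := by
    refine Summable.of_norm_bounded (g := fun t => (lam * γ) ^ t * C)
      ((summable_geometric_of_lt_one hlg0 hlg1).mul_right C) (fun t => ?_)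
    rw [norm_smul, Real.norm_eq_abs, abs_of_nonneg (pow_nonneg hlg0 t)]
    exact mul_le_mul_of_nonneg_left (hDle t Δ) (pow_nonneg hlg0 t)
  refine ⟨hsum1, hsum2, ?_⟩
  -- the double-indexed family
  set F : ℕ × ℕ → X × A → ℝ :=
    fun q => (if q.2 ≤ q.1 then (1 - lam) * lam ^ q.1 * γ ^ q.2 else 0) • D^[q.2] Δ with hF
  have hFsum : Summable F := by
    refine Summable.of_norm_bounded
      (g := fun (q : ℕ × ℕ) => ((1 - lam) * lam ^ q.1) * (γ ^ q.2 * C)) ?_ ?_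
    · exact Summable.mul_of_nonneg
        ((summable_geometric_of_lt_one hl0 hl1).mul_left (1 - lam))
        ((summable_geometric_of_lt_one hγ0 hγ1).mul_right C)
        (fun n => mul_nonneg hl1'.le (pow_nonneg hl0 n))
        (fun t => mul_nonneg (pow_nonneg hγ0 t) hC0)
    · rintro ⟨n, t⟩
      rw [norm_smul, Real.norm_eq_abs]
      by_cases h : t ≤ n
      · simp only [if_pos h]
        rw [abs_of_nonneg (by positivity)]
        calc (1 - lam) * lam ^ n * γ ^ t * ‖D^[t] Δ‖
            ≤ (1 - lam) * lam ^ n * γ ^ t * C :=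
              mul_le_mul_of_nonneg_left (hDle t Δ) (by positivity)
          _ = (1 - lam) * lam ^ n * (γ ^ t * C) := by ring
      · simp only [if_neg h, abs_zero, zero_mul]
        positivity
  -- first order: sum over n then t
  have hA1 : ∑' q : ℕ × ℕ, F q = ∑' n : ℕ, ((1 - lam) * lam ^ n) • S n := by
    rw [Summable.tsum_prod' hFsum hFsum.prod_factor]
    congr 1; funext n
    have : ∑' t : ℕ, F (n, t) = ∑ t ∈ Finset.range (n + 1), F (n, t) := by
      refine tsum_eq_sum fun t ht => ?_
      have : ¬ t ≤ n := by simpa [Nat.lt_succ_iff] using ht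
      simp [hF, this]
    rw [this, hS, Finset.smul_sum]
    refine Finset.sum_congr rfl fun t ht => ?_
    have h : t ≤ n := Nat.lt_succ_iff.mp (Finset.mem_range.mp ht)
    simp only [hF, if_pos h, smul_smul]
  -- second order: sum over t then n
  have hA2 : ∑' q : ℕ × ℕ, F q = ∑' t : ℕ, (lam * γ) ^ t • D^[t] Δ := by
    have hswap : Summable (F ∘ (Equiv.prodComm ℕ ℕ)) :=
      (Equiv.prodComm ℕ ℕ).summable_iff.mpr hFsum
    rw [← (Equiv.prodComm ℕ ℕ).tsum_eq F]
    have hiter := Summable.tsum_prod' hswap hswap.prod_factor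
    simp only [Function.comp] at hiter
    rw [hiter]
    congr 1; funext t
    have hsc : Summable (fun n : ℕ => if t ≤ n then (1 - lam) * lam ^ n * γ ^ t else 0) := by
      refine Summable.of_nonneg_of_le (fun n => by positivity)
        (fun n => ?_) (((summable_geometric_of_lt_one hl0 hl1).mul_left (1 - lam)).mul_right (γ ^ t))
      by_cases h : t ≤ n
      · simp [h]
      · simp only [if_neg h]; positivity
    have heval : ∀ n : ℕ, F (n, t) = (if t ≤ n then (1 - lam) * lam ^ n * γ ^ t else 0) • D^[t] Δ :=
      fun n => rfl
    have : ∑' n : ℕ, F (n, t) = (∑' n : ℕ, if t ≤ n then (1 - lam) * lam ^ n * γ ^ t else 0) • D^[t] Δ := by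
      simp only [heval]; exact Summable.tsum_smul_const hsc _
    simp only [Equiv.prodComm_apply, Prod.swap, Function.comp]
    rw [this]
    congr 1
    -- scalar computation
    have hite : (fun n : ℕ => if t ≤ n then (1 - lam) * lam ^ n * γ ^ t else 0)
        = fun n : ℕ => ((1 - lam) * γ ^ t) * (if t ≤ n then lam ^ n else 0) := by
      funext n; by_cases h : t ≤ n <;> simp [h] <;> ring
    rw [hite, tsum_mul_left]
    have hgeo : Summable (fun n : ℕ => if t ≤ n then lam ^ n else 0) := by
      refine Summable.of_nonneg_of_le (fun n => by positivity) (fun n => ?_)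
        (summable_geometric_of_lt_one hl0 hl1)
      by_cases h : t ≤ n
      · simp [h]
      · simp only [if_neg h]; positivity
    have hval : ∑' n : ℕ, (if t ≤ n then lam ^ n else 0) = lam ^ t * (1 - lam)⁻¹ := by
      rw [← Summable.sum_add_tsum_nat_add t hgeo]
      have h1 : ∑ i ∈ Finset.range t, (if t ≤ i then lam ^ i else 0) = 0 :=
        Finset.sum_eq_zero fun i hi => by
          simp [Nat.not_le.mpr (Finset.mem_range.mp hi)]
      have h2 : ∀ i : ℕ, (if t ≤ i + t then lam ^ (i + t) else 0) = lam ^ t * lam ^ i := by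
        intro i; rw [if_pos (Nat.le_add_left t i), pow_add]; ring
      simp only [h1, zero_add, h2]
      rw [tsum_mul_left, tsum_geometric_of_lt_one hl0 hl1]
    rw [hval, mul_pow]
    field_simp
  -- summability of pieces
  have hQs : Summable (fun n : ℕ => ((1 - lam) * lam ^ n) • Q) :=
    ((summable_geometric_of_lt_one hl0 hl1).mul_left (1 - lam)).smul_const Q
  have hSs : Summable (fun n : ℕ => ((1 - lam) * lam ^ n) • S n) := by
    refine Summable.of_norm_bounded
      (g := fun n => (1 - lam) * lam ^ n * (C * (1 - γ)⁻¹)) ?_ ?_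
    · exact ((summable_geometric_of_lt_one hl0 hl1).mul_left (1 - lam)).mul_right _
    · intro n
      rw [norm_smul, Real.norm_eq_abs, abs_of_nonneg (by positivity)]
      exact mul_le_mul_of_nonneg_left (hSbound n) (by positivity)
  calc ∑' n : ℕ, ((1 - lam) * lam ^ n) • Rn P π μ γ r n Q
      = ∑' n : ℕ, (((1 - lam) * lam ^ n) • Q + ((1 - lam) * lam ^ n) • S n) := by
        congr 1; funext n; rw [hRn n, smul_add]
    _ = (∑' n : ℕ, ((1 - lam) * lam ^ n) • Q) + ∑' n : ℕ, ((1 - lam) * lam ^ n) • S n :=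
        Summable.tsum_add hQs hSs
    _ = Q + ∑' t : ℕ, (lam * γ) ^ t • D^[t] Δ := by
        rw [← hA1, hA2]
        congr 1
        rw [Summable.tsum_smul_const ((summable_geometric_of_lt_one hl0 hl1).mul_left (1 - lam)),
          tsum_mul_left, tsum_geometric_of_lt_one hl0 hl1]
        rw [mul_inv_cancel₀ (ne_of_gt hl1'), one_smul]
end
end

section
/- Suppose max_{x} ∑_{a} |π(a|x) − μ(a|x)| ≤ ε with λ ∈ [0,1], γ ∈ (0,1) and γ(1−λ+λε)/(1−λγ) < 1. Then Q^π is the unique fixed point of the operator R^π_λ: if R^π_λ Q = Q then Q = Q^π. -/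
open scoped BigOperators

noncomputable section

/-- The off-policy corrected λ-operator
`R^π_λ Q = Q + ∑_{t≥0} (λγ)^t (P^μ)^t (T^π Q − Q)`. -/
def Rpi {X A : Type*} [Fintype X] [Fintype A] (P : X → A → X → ℝ) (π μ : X → A → ℝ)
    (γ lam : ℝ) (r : X × A → ℝ) (Q : X × A → ℝ) : X × A → ℝ :=
  Q + ∑' t : ℕ, (lam * γ) ^ t • (Pop P μ)^[t] (Tpol P π γ r Q - Q)

/-- `Pop` as a linear map. -/
def PopL {X A : Type*} [Fintype X] [Fintype A] (P : X → A → X → ℝ) (σ : X → A → ℝ) :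
    (X × A → ℝ) →ₗ[ℝ] (X × A → ℝ) where
  toFun := Pop P σ
  map_add' Q R := by
    funext p
    simp [Pop, mul_add, Finset.sum_add_distrib]
  map_smul' c Q := by
    funext p
    simp only [Pop, Pi.smul_apply, smul_eq_mul, RingHom.id_apply, Finset.mul_sum]
    refine Finset.sum_congr rfl fun y _ => Finset.sum_congr rfl fun b _ => by ring

/-- `Pop` as a continuous linear map. -/
def PopCL {X A : Type*} [Fintype X] [Fintype A] (P : X → A → X → ℝ) (σ : X → A → ℝ) :
    (X × A → ℝ) →L[ℝ] (X × A → ℝ) :=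
  ⟨PopL P σ, (PopL P σ).continuous_of_finiteDimensional⟩

/-- uniqueness of the fixed point of `R^π_λ` when the contraction
coefficient `γ(1−λ+λε)/(1−λγ)` is below 1: any fixed point of `R^π_λ` equals `Q^π`. -/
theorem stmt9 {X A : Type*} [Fintype X] [Fintype A] [Nonempty X] [Nonempty A]
    (P : X → A → X → ℝ)
    (hP0 : ∀ x a y, 0 ≤ P x a y) (hP1 : ∀ x a, ∑ y : X, P x a y = 1)
    (π μ : X → A → ℝ)
    (hπ0 : ∀ x a, 0 ≤ π x a) (hπ1 : ∀ x, ∑ a : A, π x a = 1)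
    (hμ0 : ∀ x a, 0 ≤ μ x a) (hμ1 : ∀ x, ∑ a : A, μ x a = 1)
    (ε : ℝ) (hε : ∀ x, ∑ a : A, |π x a - μ x a| ≤ ε)
    (γ : ℝ) (hγ0 : 0 < γ) (hγ1 : γ < 1)
    (lam : ℝ) (hl0 : 0 ≤ lam) (hl1 : lam ≤ 1)
    (hη : γ * (1 - lam + lam * ε) / (1 - lam * γ) < 1)
    (r : X × A → ℝ) (Qπ : X × A → ℝ)
    (hQπ : Qπ = r + γ • Pop P π Qπ) :
    ∀ Q : X × A → ℝ, Rpi P π μ γ lam r Q = Q → Q = Qπ := by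
  -- contraction property of `Pop`
  have key : ∀ (σ : X → A → ℝ), (∀ x b, 0 ≤ σ x b) → (∀ x, ∑ b : A, σ x b = 1) →
      ∀ R : X × A → ℝ, ‖Pop P σ R‖ ≤ ‖R‖ := by
    intro σ hσ0 hσ1 R
    rw [pi_norm_le_iff_of_nonneg (norm_nonneg R)]
    intro p
    simp only [Pop, Real.norm_eq_abs]
    calc |∑ y : X, ∑ b : A, P p.1 p.2 y * σ y b * R (y, b)|
        ≤ ∑ y : X, ∑ b : A, |P p.1 p.2 y * σ y b * R (y, b)| :=
          (Finset.abs_sum_le_sum_abs _ _).trans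
            (Finset.sum_le_sum fun y _ => Finset.abs_sum_le_sum_abs _ _)
      _ ≤ ∑ y : X, ∑ b : A, P p.1 p.2 y * σ y b * ‖R‖ := by
          refine Finset.sum_le_sum fun y _ => Finset.sum_le_sum fun b _ => ?_
          rw [abs_mul, abs_mul, abs_of_nonneg (hP0 _ _ _), abs_of_nonneg (hσ0 _ _)]
          have h1 : |R (y, b)| ≤ ‖R‖ := by
            have := norm_le_pi_norm R (y, b)
            simpa [Real.norm_eq_abs] using this
          have h2 : 0 ≤ P p.1 p.2 y * σ y b := mul_nonneg (hP0 _ _ _) (hσ0 _ _)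
          exact mul_le_mul_of_nonneg_left h1 h2
      _ = ∑ y : X, P p.1 p.2 y * ‖R‖ := by
          refine Finset.sum_congr rfl fun y _ => ?_
          rw [← Finset.sum_mul, ← Finset.mul_sum, hσ1 y, mul_one]
      _ = ‖R‖ := by rw [← Finset.sum_mul, hP1, one_mul]
  intro Q hQ
  set a : ℝ := lam * γ with ha
  have ha0 : 0 ≤ a := mul_nonneg hl0 hγ0.le
  have ha1 : a < 1 := by
    calc a ≤ 1 * γ := mul_le_mul_of_nonneg_right hl1 hγ0.le
    _ < 1 := by linarith
  set D : X × A → ℝ := Tpol P π γ r Q - Q with hD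
  -- the series defining `Rpi` is summable
  have hiter : ∀ t : ℕ, ‖(Pop P μ)^[t] D‖ ≤ ‖D‖ := by
    intro t
    induction t with
    | zero => simp
    | succ n ih =>
        rw [Function.iterate_succ_apply']
        exact (key μ hμ0 hμ1 _).trans ih
  have hsum : Summable (fun t : ℕ => a ^ t • (Pop P μ)^[t] D) := by
    refine Summable.of_norm_bounded
      ((summable_geometric_of_lt_one ha0 ha1).mul_right ‖D‖) (fun t => ?_)
    rw [norm_smul, Real.norm_eq_abs, abs_of_nonneg (pow_nonneg ha0 t)]
    exact mul_le_mul_of_nonneg_left (hiter t) (pow_nonneg ha0 t)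
  -- the fixed-point equation says the series sums to 0
  have hS0 : (∑' t : ℕ, a ^ t • (Pop P μ)^[t] D) = 0 := by
    have := hQ
    unfold Rpi at this
    rw [← hD] at this
    exact add_eq_left.mp this
  -- shift identity: S = D + a • PopCL S
  have hshift : (∑' t : ℕ, a ^ t • (Pop P μ)^[t] D)
      = D + a • PopCL P μ (∑' t : ℕ, a ^ t • (Pop P μ)^[t] D) := by
    conv_lhs => rw [Summable.tsum_eq_zero_add hsum]
    simp only [pow_zero, one_smul, Function.iterate_zero_apply]
    congr 1
    have heq : ∀ t : ℕ, a ^ (t + 1) • (Pop P μ)^[t + 1] D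
        = a • PopCL P μ (a ^ t • (Pop P μ)^[t] D) := by
      intro t
      rw [Function.iterate_succ_apply', pow_succ]
      rw [map_smul]
      show (a ^ t * a) • (Pop P μ) ((Pop P μ)^[t] D) = a • a ^ t • (Pop P μ) ((Pop P μ)^[t] D)
      rw [mul_comm, mul_smul]
    rw [tsum_congr heq]
    rw [tsum_const_smul'' a]
    congr 1
    exact ((PopCL P μ).map_tsum hsum).symm
  rw [hS0] at hshift
  have hD0 : D = 0 := by
    have : (0 : X × A → ℝ) = D + a • PopCL P μ 0 := hshift
    rw [map_zero, smul_zero, add_zero] at this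
    exact this.symm
  -- hence T^π Q = Q, and by contraction Q = Qπ
  have hTQ : Q = r + γ • Pop P π Q := by
    have := sub_eq_zero.mp hD0
    unfold Tpol at this
    exact this.symm
  have hdiff : Q - Qπ = γ • Pop P π (Q - Qπ) := by
    have hlin : Pop P π (Q - Qπ) = Pop P π Q - Pop P π Qπ := map_sub (PopL P π) Q Qπ
    rw [hlin, smul_sub]
    calc Q - Qπ = (r + γ • Pop P π Q) - (r + γ • Pop P π Qπ) := by rw [← hTQ, ← hQπ]
    _ = γ • Pop P π Q - γ • Pop P π Qπ := by abel
  have hnorm : ‖Q - Qπ‖ ≤ γ * ‖Q - Qπ‖ := by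
    calc ‖Q - Qπ‖ = ‖γ • Pop P π (Q - Qπ)‖ := by rw [← hdiff]
    _ = γ * ‖Pop P π (Q - Qπ)‖ := by
        rw [norm_smul, Real.norm_eq_abs, abs_of_nonneg hγ0.le]
    _ ≤ γ * ‖Q - Qπ‖ := mul_le_mul_of_nonneg_left (key π hπ0 hπ1 _) hγ0.le
  have : ‖Q - Qπ‖ = 0 := by nlinarith [norm_nonneg (Q - Qπ)]
  have := norm_eq_zero.mp this
  exact sub_eq_zero.mp this
end
end

section
/- (Proposition 1, fixed-point characterization.) For policies π and μ, λ ∈ [0,1), define the General Q(λ) operator R Q := ∑_{t≥0} (λγ)^t (P^μ)^t [ r + (1−λ) γ P^π Q ]. Then a Q-function Q satisfies R Q = Q if and only if Q = (1−λ) T^π Q + λ T^μ Q, i.e. Q is a fixed point of the mixed Bellman operator (1−λ)T^π + λT^μ. -/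
open scoped BigOperators

noncomputable section

/-- The General Q(λ) operator `R Q = ∑_{t≥0} (λγ)^t (P^μ)^t [ r + (1−λ) γ P^π Q ]`. -/
def Rgen {X A : Type*} [Fintype X] [Fintype A] (P : X → A → X → ℝ) (π μ : X → A → ℝ)
    (γ lam : ℝ) (r : X × A → ℝ) (Q : X × A → ℝ) : X × A → ℝ :=
  ∑' t : ℕ, (lam * γ) ^ t • (Pop P μ)^[t] (r + ((1 - lam) * γ) • Pop P π Q)

section Aux

variable {X A : Type*} [Fintype X] [Fintype A]

lemma Pop_eq_sum (P : X → A → X → ℝ) (μ : X → A → ℝ) (Q : X × A → ℝ) (p : X × A) :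
    Pop P μ Q p = ∑ q : X × A, P p.1 p.2 q.1 * μ q.1 q.2 * Q q := by
  rw [Pop, Fintype.sum_prod_type]

lemma weight_sum (P : X → A → X → ℝ) (hP1 : ∀ x a, ∑ y : X, P x a y = 1)
    (μ : X → A → ℝ) (hμ1 : ∀ x, ∑ a : A, μ x a = 1) (p : X × A) :
    ∑ q : X × A, P p.1 p.2 q.1 * μ q.1 q.2 = 1 := by
  rw [Fintype.sum_prod_type]
  simp_rw [← Finset.mul_sum, hμ1, mul_one, hP1]

lemma Pop_bound (P : X → A → X → ℝ) (hP0 : ∀ x a y, 0 ≤ P x a y)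
    (hP1 : ∀ x a, ∑ y : X, P x a y = 1)
    (μ : X → A → ℝ) (hμ0 : ∀ x a, 0 ≤ μ x a) (hμ1 : ∀ x, ∑ a : A, μ x a = 1)
    {Q : X × A → ℝ} {C : ℝ} (hQ : ∀ q, |Q q| ≤ C) (p : X × A) :
    |Pop P μ Q p| ≤ C := by
  rw [Pop_eq_sum]
  calc |∑ q : X × A, P p.1 p.2 q.1 * μ q.1 q.2 * Q q|
      ≤ ∑ q : X × A, |P p.1 p.2 q.1 * μ q.1 q.2 * Q q| := Finset.abs_sum_le_sum_abs _ _
    _ ≤ ∑ q : X × A, P p.1 p.2 q.1 * μ q.1 q.2 * C := by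
        refine Finset.sum_le_sum fun q _ => ?_
        rw [abs_mul, abs_of_nonneg (mul_nonneg (hP0 _ _ _) (hμ0 _ _))]
        exact mul_le_mul_of_nonneg_left (hQ q) (mul_nonneg (hP0 _ _ _) (hμ0 _ _))
    _ = C := by rw [← Finset.sum_mul, weight_sum P hP1 μ hμ1, one_mul]

lemma iter_bound (P : X → A → X → ℝ) (hP0 : ∀ x a y, 0 ≤ P x a y)
    (hP1 : ∀ x a, ∑ y : X, P x a y = 1)
    (μ : X → A → ℝ) (hμ0 : ∀ x a, 0 ≤ μ x a) (hμ1 : ∀ x, ∑ a : A, μ x a = 1)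
    {Q : X × A → ℝ} {C : ℝ} (hQ : ∀ q, |Q q| ≤ C) :
    ∀ t, ∀ p, |(Pop P μ)^[t] Q p| ≤ C := by
  intro t
  induction t with
  | zero => simpa using hQ
  | succ n ih =>
      intro p
      rw [Function.iterate_succ_apply']
      exact Pop_bound P hP0 hP1 μ hμ0 hμ1 ih p

lemma Pop_lin (P : X → A → X → ℝ) (μ : X → A → ℝ) (c : ℝ) (f g : X × A → ℝ) :
    Pop P μ (f + c • g) = Pop P μ f + c • Pop P μ g := by
  funext p
  simp only [Pop_eq_sum, Pi.add_apply, Pi.smul_apply, smul_eq_mul, Finset.mul_sum,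
    ← Finset.sum_add_distrib]
  exact Finset.sum_congr rfl fun q _ => by ring

lemma iter_lin (P : X → A → X → ℝ) (μ : X → A → ℝ) (c : ℝ) (f g : X × A → ℝ) :
    ∀ n, (Pop P μ)^[n] (f + c • g) = (Pop P μ)^[n] f + c • (Pop P μ)^[n] g := by
  intro n
  induction n with
  | zero => simp
  | succ n ih =>
      rw [Function.iterate_succ_apply', Function.iterate_succ_apply',
        Function.iterate_succ_apply', ih, Pop_lin]

end Aux

/-- Proposition 1, fixed-point characterization: `R Q = Q` iff
`Q = (1−λ) T^π Q + λ T^μ Q`. -/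
theorem stmt16 {X A : Type*} [Fintype X] [Fintype A] [Nonempty X] [Nonempty A]
    (P : X → A → X → ℝ)
    (hP0 : ∀ x a y, 0 ≤ P x a y) (hP1 : ∀ x a, ∑ y : X, P x a y = 1)
    (π μ : X → A → ℝ)
    (hπ0 : ∀ x a, 0 ≤ π x a) (hπ1 : ∀ x, ∑ a : A, π x a = 1)
    (hμ0 : ∀ x a, 0 ≤ μ x a) (hμ1 : ∀ x, ∑ a : A, μ x a = 1)
    (γ : ℝ) (hγ0 : 0 ≤ γ) (hγ1 : γ < 1)
    (lam : ℝ) (hl0 : 0 ≤ lam) (hl1 : lam < 1)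
    (r : X × A → ℝ) (Q : X × A → ℝ) :
    Rgen P π μ γ lam r Q = Q ↔
      Q = (1 - lam) • Tpol P π γ r Q + lam • Tpol P μ γ r Q := by
  classical
  set c : ℝ := lam * γ with hc
  have hc0 : 0 ≤ c := mul_nonneg hl0 hγ0
  have hc1 : c < 1 := lt_of_le_of_lt (mul_le_of_le_one_right hl0 hγ1.le) hl1
  set G : X × A → ℝ := r + ((1 - lam) * γ) • Pop P π Q with hG
  set F : ℕ → X × A → ℝ := fun t => (Pop P μ)^[t] G with hF
  -- a uniform bound on G
  have hne : (Finset.univ : Finset (X × A)).Nonempty := Finset.univ_nonempty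
  obtain ⟨CG, hCG⟩ : ∃ C, ∀ q, |G q| ≤ C :=
    ⟨Finset.univ.sup' hne fun q => |G q|, fun q => Finset.le_sup' (fun q => |G q|) (Finset.mem_univ q)⟩
  have hFb : ∀ t p, |F t p| ≤ CG := fun t p =>
    iter_bound P hP0 hP1 μ hμ0 hμ1 hCG t p
  -- pointwise summability
  have hsum : ∀ q, Summable (fun t : ℕ => c ^ t * F t q) := by
    intro q
    refine Summable.of_norm_bounded
      ((summable_geometric_of_lt_one hc0 hc1).mul_left CG) fun t => ?_
    rw [Real.norm_eq_abs, abs_mul, abs_pow, abs_of_nonneg hc0]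
    calc c ^ t * |F t q| ≤ c ^ t * CG :=
          mul_le_mul_of_nonneg_left (hFb t q) (pow_nonneg hc0 t)
      _ = CG * c ^ t := mul_comm _ _
  have hsumPi : Summable (fun t : ℕ => c ^ t • F t) := by
    rw [Pi.summable]
    intro q
    simpa using hsum q
  have hRapp : ∀ q, Rgen P π μ γ lam r Q q = ∑' t : ℕ, c ^ t * F t q := by
    intro q
    rw [Rgen]
    rw [show (fun t : ℕ => (lam * γ) ^ t • (Pop P μ)^[t] (r + ((1 - lam) * γ) • Pop P π Q))
        = fun t : ℕ => c ^ t • F t from rfl]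
    rw [tsum_apply hsumPi]
    simp
  constructor
  · -- forward direction
    intro hR
    have hQcoord : ∀ q, ∑' t : ℕ, c ^ t * F t q = Q q := by
      intro q; rw [← hRapp q, hR]
    have key : ∀ p, Q p = G p + c * Pop P μ Q p := by
      intro p
      have h0 : Q p = ∑' t : ℕ, c ^ t * F t p := (hQcoord p).symm
      rw [Summable.tsum_eq_zero_add (hsum p)] at h0
      have hshift : ∀ t : ℕ, c ^ (t + 1) * F (t + 1) p
          = ∑ q : X × A, (c * (P p.1 p.2 q.1 * μ q.1 q.2)) * (c ^ t * F t q) := by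
        intro t
        have : F (t + 1) p = Pop P μ (F t) p := by
          simp only [hF, Function.iterate_succ_apply']
        rw [this, Pop_eq_sum, Finset.mul_sum]
        exact Finset.sum_congr rfl fun q _ => by ring
      have h1 : (∑' t : ℕ, c ^ (t + 1) * F (t + 1) p) = c * Pop P μ Q p := by
        simp_rw [hshift]
        rw [Summable.tsum_finsetSum fun q _ => (hsum q).mul_left _]
        rw [Pop_eq_sum, Finset.mul_sum]
        refine Finset.sum_congr rfl fun q _ => ?_
        rw [tsum_mul_left, hQcoord q]; ring
      rw [h1] at h0
      simpa [hF] using h0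
    funext p
    have := key p
    simp only [hG, Pi.add_apply, Pi.smul_apply, smul_eq_mul, Tpol] at this ⊢
    rw [this]; ring
  · -- backward direction
    intro hmix
    have hfix : Q = G + c • Pop P μ Q := by
      funext p
      have := congrFun hmix p
      simp only [hG, Pi.add_apply, Pi.smul_apply, smul_eq_mul, Tpol] at this ⊢
      rw [this]; ring
    -- uniform bound on Q
    obtain ⟨CQ, hCQ⟩ : ∃ C, ∀ q, |Q q| ≤ C :=
      ⟨Finset.univ.sup' hne fun q => |Q q|, fun q => Finset.le_sup' (fun q => |Q q|) (Finset.mem_univ q)⟩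
    have hQb : ∀ n p, |(Pop P μ)^[n] Q p| ≤ CQ := fun n p =>
      iter_bound P hP0 hP1 μ hμ0 hμ1 hCQ n p
    have tele : ∀ n p, ∑ t ∈ Finset.range n, c ^ t * F t p
        = Q p - c ^ n * (Pop P μ)^[n] Q p := by
      intro n
      induction n with
      | zero => intro p; simp
      | succ n ih =>
          intro p
          rw [Finset.sum_range_succ, ih p]
          have h2 : (Pop P μ)^[n] Q p = F n p + c * (Pop P μ)^[n + 1] Q p := by
            conv_lhs => rw [hfix]
            rw [iter_lin]
            simp only [Pi.add_apply, Pi.smul_apply, smul_eq_mul]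
            rw [← Function.iterate_succ_apply]
          rw [h2]; ring
    have hhas : ∀ p, HasSum (fun t : ℕ => c ^ t * F t p) (Q p) := by
      intro p
      rw [(hsum p).hasSum_iff_tendsto_nat]
      have hz : Filter.Tendsto (fun n : ℕ => c ^ n * (Pop P μ)^[n] Q p)
          Filter.atTop (nhds 0) := by
        refine squeeze_zero_norm (fun n => ?_)
          (by simpa using (tendsto_pow_atTop_nhds_zero_of_lt_one hc0 hc1).const_mul CQ)
        rw [Real.norm_eq_abs, abs_mul, abs_pow, abs_of_nonneg hc0]
        calc c ^ n * |(Pop P μ)^[n] Q p| ≤ c ^ n * CQ :=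
              mul_le_mul_of_nonneg_left (hQb n p) (pow_nonneg hc0 n)
          _ = CQ * c ^ n := mul_comm _ _
      have : Filter.Tendsto (fun n : ℕ => Q p - c ^ n * (Pop P μ)^[n] Q p)
          Filter.atTop (nhds (Q p)) := by
        simpa using (tendsto_const_nhds (x := Q p)).sub hz
      exact this.congr fun n => (tele n p).symm
    funext q
    rw [hRapp q]
    exact (hhas q).tsum_eq
end
end
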